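/- If D is a digraph attaining its Sperner capacity in finite length, i.e., C_Sp(D) = ω_tr(D^k)^(1/k) for some positive integer k, then C_Sp(M(D)) > C_Sp(D). -/

import Mathlib

/-- The `t`-th OR-power of a digraph (given as an arc relation): there is an arc from
`x` to `y` iff in some coordinate `(x i, y i)` is an arc. -/
def dORpow {V : Type*} (D : V → V → Prop) (t : ℕ) : (Fin t → V) → (Fin t → V) → Prop :=
  fun x y => ∃ i, D (x i) (y i)

/-- The Mycielskian of a digraph: vertex set `V × {0,1} ∪ {z}`, arcs `((v,0),(w,i))` and
`((v,1),(w,0))` for arcs `(v,w)`, `i ∈ {0,1}`, and arcs `(z,(v,1))` for all `v`. -/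
def dMycielskian {V : Type*} (D : V → V → Prop) :
    (V × Bool ⊕ Unit) → (V × Bool ⊕ Unit) → Prop
  | Sum.inl (v, a), Sum.inl (w, b) => D v w ∧ (a = false ∨ b = false)
  | Sum.inr _, Sum.inl (_, b) => b = true
  | _, _ => False

/-- The Mycielskian of a digraph with the top vertex removed (induced on `V × {0,1}`). -/
def dMycielskianCore {V : Type*} (D : V → V → Prop) : (V × Bool) → (V × Bool) → Prop :=
  fun x y => D x.1 y.1 ∧ (x.2 = false ∨ y.2 = false)

/-- `f` lists a transitive clique of size `m` in the digraph `D`: the vertices are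
distinct and every earlier one sends an arc to every later one. -/
def IsTransClique {V : Type*} (D : V → V → Prop) (m : ℕ) (f : Fin m → V) : Prop :=
  Function.Injective f ∧ ∀ i j : Fin m, i < j → D (f i) (f j)

/-- The transitive clique number `ω_tr` of a digraph. -/
noncomputable def transCliqueNum {V : Type*} (D : V → V → Prop) : ℕ :=
  sSup {m | ∃ f : Fin m → V, IsTransClique D m f}

/-- The transitive tournament on `n` vertices. -/
def transTournament (n : ℕ) : Fin n → Fin n → Prop := fun i j => i < j

/-! ### Auxiliary lemmas -/

lemma bddAbove_cliqueSet {X : Type*} [Fintype X] (E : X → X → Prop) :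
    BddAbove {m | ∃ f : Fin m → X, IsTransClique E m f} := by
  refine ⟨Fintype.card X, fun m hm => ?_⟩
  obtain ⟨f, hf, -⟩ := hm
  simpa using Fintype.card_le_of_injective f hf

/-- If an injective family of vertices, linearly preordered by an injective numeric key,
has an arc from every smaller-key vertex to every larger-key vertex, then the transitive
clique number is at least the size of the family. -/
lemma le_transCliqueNum_of_key {X : Type*} [Fintype X] (E : X → X → Prop)
    {I : Type*} [Fintype I] (u : I → X) (key : I → ℕ)
    (hu : Function.Injective u) (hkey : Function.Injective key)
    (harc : ∀ a b, key a < key b → E (u a) (u b)) :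
    Fintype.card I ≤ transCliqueNum E := by
  rcases isEmpty_or_nonempty I with hI | hI
  · simp [Fintype.card_eq_zero]
  set N := Fintype.card I with hN
  set s : Finset ℕ := Finset.image key Finset.univ with hs
  have hcard : s.card = N := by
    rw [hs, Finset.card_image_of_injective _ hkey, Finset.card_univ]
  let o := s.orderIsoOfFin hcard
  let g : Fin N → I := fun i => Function.invFun key (o i)
  have hg : ∀ i, key (g i) = (o i : ℕ) := by
    intro i
    apply Function.invFun_eq
    have h2 : (o i : ℕ) ∈ s := (o i).2
    simp only [hs, Finset.mem_image] at h2
    obtain ⟨a, -, ha⟩ := h2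
    exact ⟨a, ha⟩
  have hkeylt : ∀ i j : Fin N, i < j → key (g i) < key (g j) := by
    intro i j hij
    rw [hg, hg]
    exact_mod_cast o.strictMono hij
  refine le_csSup (bddAbove_cliqueSet E) ?_
  refine ⟨u ∘ g, ?_, ?_⟩
  · intro i j hij
    have h1 : key (g i) = key (g j) := congrArg key (hu hij)
    have h2 : (o i : ℕ) = (o j : ℕ) := by rw [← hg, ← hg, h1]
    exact o.injective (Subtype.ext h2)
  · intro i j hij
    exact harc _ _ (hkeylt i j hij)

lemma digit_lt_digit {C A A' r r' : ℕ} (hr : r < C) (h : A < A') :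
    A * C + r < A' * C + r' := by
  calc A * C + r < A * C + C := by omega
    _ = (A + 1) * C := by ring
    _ ≤ A' * C := Nat.mul_le_mul_right C h
    _ ≤ A' * C + r' := Nat.le_add_right _ _

lemma digit_le_of_le {C A A' r r' : ℕ} (hr : r < C) (hr' : r' < C)
    (h : A * C + r ≤ A' * C + r') : A ≤ A' := by
  by_contra hc
  push_neg at hc
  have := digit_lt_digit (r := r') (r' := r) hr' hc
  omega

lemma digit_eq_of_eq {C A A' r r' : ℕ} (hr : r < C) (hr' : r' < C)
    (h : A * C + r = A' * C + r') : A = A' ∧ r = r' := by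
  have h1 : A ≤ A' := digit_le_of_le hr hr' h.le
  have h2 : A' ≤ A := digit_le_of_le hr' hr h.ge
  have hAA : A = A' := le_antisymm h1 h2
  subst hAA
  exact ⟨rfl, by omega⟩

lemma words_exists_lt {n m : ℕ} {w w' : Fin m → Fin n}
    (h : (∑ i, (w i : ℕ)) < ∑ i, (w' i : ℕ)) : ∃ p, w p < w' p := by
  by_contra hc
  push_neg at hc
  have h2 := Finset.sum_le_sum (s := Finset.univ) (fun i _ => (Fin.le_def.1 (hc i)))
  omega

/-- The key combinatorial lemma: for two distinct words over `Fin n` of length `m ≥ n`,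
appropriately ordered, there is a position where the first word is strictly smaller and
which is not simultaneously the "marked" (`sum mod m`) position of both words. -/
lemma words_safety {n m : ℕ} (hm : 0 < m) (hnm : n ≤ m) (w w' : Fin m → Fin n)
    (hne : w ≠ w') (hS : (∑ i, (w i : ℕ)) ≤ ∑ i, (w' i : ℕ))
    (hinv : (∑ i, (w i : ℕ)) = (∑ i, (w' i : ℕ)) →
      (w' ⟨(∑ i, (w i : ℕ)) % m, Nat.mod_lt _ hm⟩ : ℕ) ≤
        w ⟨(∑ i, (w i : ℕ)) % m, Nat.mod_lt _ hm⟩) :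
    ∃ p : Fin m, w p < w' p ∧
      ¬((∑ i, (w i : ℕ)) % m = p.val ∧ (∑ i, (w' i : ℕ)) % m = p.val) := by
  set s := ∑ i, (w i : ℕ) with hs
  set s' := ∑ i, (w' i : ℕ) with hs'
  by_cases hπ : s % m = s' % m
  · set p₀ : Fin m := ⟨s % m, Nat.mod_lt _ hm⟩ with hp₀
    by_contra hcon
    push_neg at hcon
    have hforce : ∀ q : Fin m, q ≠ p₀ → (w' q : ℕ) ≤ w q := by
      intro q hq
      by_contra hlt
      push_neg at hlt
      have h2 := hcon q (by exact_mod_cast hlt)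
      exact hq (Fin.ext (h2.1.symm))
    have herase : ∑ q ∈ Finset.univ.erase p₀, (w' q : ℕ) ≤
        ∑ q ∈ Finset.univ.erase p₀, (w q : ℕ) :=
      Finset.sum_le_sum (fun q hq => hforce q (Finset.mem_erase.1 hq).1)
    have hsplit : (w p₀ : ℕ) + ∑ q ∈ Finset.univ.erase p₀, (w q : ℕ)
        = ∑ q, (w q : ℕ) := Finset.add_sum_erase _ (fun q => (w q : ℕ)) (Finset.mem_univ p₀)
    have hsplit' : (w' p₀ : ℕ) + ∑ q ∈ Finset.univ.erase p₀, (w' q : ℕ)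
        = ∑ q, (w' q : ℕ) := Finset.add_sum_erase _ (fun q => (w' q : ℕ)) (Finset.mem_univ p₀)
    rw [← hs] at hsplit
    rw [← hs'] at hsplit'
    rcases eq_or_lt_of_le hS with heq | hlt
    · have hi := hinv heq
      have hpt : ∀ q : Fin m, (w' q : ℕ) ≤ w q := by
        intro q
        by_cases hq : q = p₀
        · subst hq; exact hi
        · exact hforce q hq
      have : ∀ q ∈ Finset.univ, (w' q : ℕ) = (w q : ℕ) := by
        rw [← Finset.sum_eq_sum_iff_of_le (fun i _ => hpt i)]
        omega
      exact hne (funext fun q => (Fin.ext ((this q (Finset.mem_univ q)).symm)))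
    · have hdvd : m ∣ s' - s := (Nat.modEq_iff_dvd' hS).1 hπ
      have hm' : m ≤ s' - s := Nat.le_of_dvd (by omega) hdvd
      have hwn : (w' p₀ : ℕ) < n := (w' p₀).2
      omega
  · have hlt : s < s' := by
      rcases eq_or_lt_of_le hS with heq | h; · exact absurd (by rw [heq]) hπ
      · exact h
    obtain ⟨p, hp⟩ := words_exists_lt hlt
    exact ⟨p, hp, fun ⟨h1, h2⟩ => hπ (h1.trans h2.symm)⟩

/-! ### The clique construction in powers of the Mycielskian -/

def mySum {n m : ℕ} (w : Fin m → Fin n) : ℕ := ∑ i, (w i : ℕ)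

def myIdx {m k : ℕ} (hk : 0 < k) (p : Fin m) (i : Fin k) : Fin (m * k) :=
  ⟨k * p.val + i.val, by
    calc k * p.val + i.val < k * p.val + k := by omega
      _ = k * (p.val + 1) := by ring
      _ ≤ k * m := Nat.mul_le_mul_left k p.2
      _ = m * k := Nat.mul_comm k m⟩

def myU {V : Type*} {n m k : ℕ} (hk : 0 < k) (f : Fin n → Fin k → V)
    (w : Fin m → Fin n) : Fin (m * k) → (V × Bool ⊕ Unit) :=
  fun j => Sum.inl (f (w ⟨j.val / k, (Nat.div_lt_iff_lt_mul hk).2 j.2⟩)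
      ⟨j.val % k, Nat.mod_lt _ hk⟩,
    decide (mySum w % m = j.val / k))

lemma myU_apply {V : Type*} {n m k : ℕ} (hk : 0 < k) (f : Fin n → Fin k → V)
    (w : Fin m → Fin n) (p : Fin m) (i : Fin k) :
    myU hk f w (myIdx hk p i) =
      Sum.inl (f (w p) i, decide (mySum w % m = p.val)) := by
  have h1 : (k * p.val + i.val) / k = p.val := by
    rw [Nat.mul_add_div hk, Nat.div_eq_of_lt i.2, add_zero]
  have h2 : (k * p.val + i.val) % k = i.val := by
    rw [Nat.mul_add_mod]; exact Nat.mod_eq_of_lt i.2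
  simp only [myU, myIdx, h1, h2, Fin.eta]

def myKey {n m : ℕ} (hm : 0 < m) (w : Fin m → Fin n) : ℕ :=
  1 + (mySum w * n + (n - 1 - (w ⟨mySum w % m, Nat.mod_lt _ hm⟩ : ℕ))) * n ^ m
    + (finFunctionFinEquiv w : ℕ)

def myUO {V : Type*} {n m k : ℕ} (hk : 0 < k) (f : Fin n → Fin k → V) :
    Option (Fin m → Fin n) → Fin (m * k) → (V × Bool ⊕ Unit)
  | none => fun _ => Sum.inr ()
  | some w => myU hk f w

def myKeyO {n m : ℕ} (hm : 0 < m) : Option (Fin m → Fin n) → ℕ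
  | none => 0
  | some w => myKey hm w

/-- From a transitive clique of size `n` in `D^k` one gets, for `n ≤ m`, a keyed transitive
clique structure of size `n^m + 1` in the `(m*k)`-th power of the Mycielskian of `D`. -/
theorem myMainClique {V : Type*} (D : V → V → Prop) {k n m : ℕ}
    (hk : 0 < k) (hm : 0 < m) (hnm : n ≤ m)
    (f : Fin n → Fin k → V) (hf : IsTransClique (dORpow D k) n f) :
    Function.Injective (myUO (n := n) (m := m) hk f) ∧
    Function.Injective (myKeyO (n := n) (m := m) hm) ∧
    ∀ a b, myKeyO (n := n) hm a < myKeyO (n := n) hm b →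
      dORpow (dMycielskian D) (m * k) (myUO hk f a) (myUO hk f b) := by
  have hcode : ∀ w : Fin m → Fin n, (finFunctionFinEquiv w : ℕ) < n ^ m :=
    fun w => (finFunctionFinEquiv w).2
  have hnpos : ∀ w : Fin m → Fin n, 0 < n := fun w => (w ⟨0, hm⟩).pos
  have hkeylt : ∀ w w' : Fin m → Fin n, myKey hm w < myKey hm w' →
      ∃ p : Fin m, w p < w' p ∧
        ¬(mySum w % m = p.val ∧ mySum w' % m = p.val) := by
    intro w w' hlt
    have hn := hnpos w
    have hwne : w ≠ w' := by rintro rfl; omega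
    simp only [myKey] at hlt
    have hA : mySum w * n + (n - 1 - (w ⟨mySum w % m, Nat.mod_lt _ hm⟩ : ℕ))
        ≤ mySum w' * n + (n - 1 - (w' ⟨mySum w' % m, Nat.mod_lt _ hm⟩ : ℕ)) :=
      digit_le_of_le (hcode w) (hcode w') (by omega)
    have hS : mySum w ≤ mySum w' :=
      digit_le_of_le (by omega) (by omega) hA
    have hinv : mySum w = mySum w' →
        (w' ⟨mySum w % m, Nat.mod_lt _ hm⟩ : ℕ) ≤ (w ⟨mySum w % m, Nat.mod_lt _ hm⟩ : ℕ) := by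
      intro hSeq
      have hb1 : (w ⟨mySum w % m, Nat.mod_lt _ hm⟩ : ℕ) < n := (w _).2
      have hb2 : (w' ⟨mySum w' % m, Nat.mod_lt _ hm⟩ : ℕ) < n := (w' _).2
      have hfix : (⟨mySum w' % m, Nat.mod_lt _ hm⟩ : Fin m) = ⟨mySum w % m, Nat.mod_lt _ hm⟩ :=
        Fin.ext (by rw [hSeq])
      rw [hfix] at hA hb2
      have hmul : mySum w * n = mySum w' * n := by rw [hSeq]
      omega
    exact words_safety hm hnm w w' hwne hS hinv
  refine ⟨?_, ?_, ?_⟩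
  · have hmk : 0 < m * k := Nat.mul_pos hm hk
    intro a b hab
    match a, b with
    | none, none => rfl
    | none, some w =>
        exact absurd (congrFun hab ⟨0, hmk⟩) (by simp [myUO, myU])
    | some w, none =>
        exact absurd (congrFun hab ⟨0, hmk⟩) (by simp [myUO, myU])
    | some w, some w' =>
        have : w = w' := by
          funext p
          apply hf.1
          funext i
          have := congrFun hab (myIdx hk p i)
          simp only [myUO, myU_apply, Sum.inl.injEq, Prod.mk.injEq] at this
          exact this.1
        rw [this]
  · intro a b hab
    match a, b with
    | none, none => rfl
    | none, some w =>
        exfalso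
        have h1 : myKeyO (n := n) (m := m) hm (some w) = myKey hm w := rfl
        have h0 : myKeyO (n := n) (m := m) hm none = 0 := rfl
        have h2 : 1 ≤ myKey hm w := by unfold myKey; omega
        omega
    | some w, none =>
        exfalso
        have h1 : myKeyO (n := n) (m := m) hm (some w) = myKey hm w := rfl
        have h0 : myKeyO (n := n) (m := m) hm none = 0 := rfl
        have h2 : 1 ≤ myKey hm w := by unfold myKey; omega
        omega
    | some w, some w' =>
        simp only [myKeyO, myKey] at hab
        have h1 := digit_eq_of_eq
          (A := mySum w * n + (n - 1 - (w ⟨mySum w % m, Nat.mod_lt _ hm⟩ : ℕ)))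
          (A' := mySum w' * n + (n - 1 - (w' ⟨mySum w' % m, Nat.mod_lt _ hm⟩ : ℕ)))
          (hcode w) (hcode w') (by omega)
        have h2 : finFunctionFinEquiv w = finFunctionFinEquiv w' := Fin.ext h1.2
        rw [finFunctionFinEquiv.injective h2]
  · intro a b hab
    match a, b with
    | none, none => simp [myKeyO] at hab
    | some w, none =>
        exfalso
        have h1 : myKeyO (n := n) (m := m) hm (some w) = myKey hm w := rfl
        have h0 : myKeyO (n := n) (m := m) hm none = 0 := rfl
        have h2 : 1 ≤ myKey hm w := by unfold myKey; omega
        omega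
    | some w, some w' =>
        have hab' : myKey hm w < myKey hm w' := hab
        obtain ⟨p, hplt, hpflag⟩ := hkeylt w w' hab'
        obtain ⟨i, hi⟩ := hf.2 (w p) (w' p) hplt
        refine ⟨myIdx hk p i, ?_⟩
        simp only [myUO, myU_apply]
        refine ⟨hi, ?_⟩
        rcases Decidable.not_and_iff_or_not.1 hpflag with h | h
        · left; simpa using h
        · right; simpa using h
    | none, some w =>
        set p₀ : Fin m := ⟨mySum w % m, Nat.mod_lt _ hm⟩ with hp₀
        refine ⟨myIdx hk p₀ ⟨0, hk⟩, ?_⟩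
        simp only [myUO, myU_apply]
        show dMycielskian D (Sum.inr ()) _
        simp [dMycielskian]
        rfl

/-- Powering a keyed transitive clique structure. -/
theorem myPowClique {V : Type*} (E : V → V → Prop) {I : Type*} [Fintype I] {T : ℕ}
    (hT : 0 < T) (u : I → Fin T → V) (key : I → ℕ)
    (hu : Function.Injective u) (hkey : Function.Injective key)
    (harc : ∀ x y, key x < key y → dORpow E T (u x) (u y)) (a : ℕ) :
    ∃ (U : (Fin a → I) → Fin (a * T) → V) (K : (Fin a → I) → ℕ),
      Function.Injective U ∧ Function.Injective K ∧
      ∀ v v', K v < K v' → dORpow E (a * T) (U v) (U v') := by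
  classical
  set B : ℕ := (Finset.univ.sup key) + 1 with hB
  have hkB : ∀ x : I, key x < B := fun x =>
    Nat.lt_succ_of_le (Finset.le_sup (Finset.mem_univ x))
  set kf : I → Fin B := fun x => ⟨key x, hkB x⟩ with hkf
  set U : (Fin a → I) → Fin (a * T) → V := fun v j =>
    u (v ⟨j.val / T, (Nat.div_lt_iff_lt_mul hT).2 j.2⟩) ⟨j.val % T, Nat.mod_lt _ hT⟩ with hU
  set K : (Fin a → I) → ℕ := fun v => (finFunctionFinEquiv (fun p => kf (v p)) : ℕ) with hK
  have hUapp : ∀ (v : Fin a → I) (p : Fin a) (i : Fin T),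
      U v (myIdx hT p i) = u (v p) i := by
    intro v p i
    have h1 : (T * p.val + i.val) / T = p.val := by
      rw [Nat.mul_add_div hT, Nat.div_eq_of_lt i.2, add_zero]
    have h2 : (T * p.val + i.val) % T = i.val := by
      rw [Nat.mul_add_mod]; exact Nat.mod_eq_of_lt i.2
    simp only [hU, myIdx, h1, h2, Fin.eta]
  refine ⟨U, K, ?_, ?_, ?_⟩
  · intro v v' hvv
    funext p
    apply hu
    funext i
    have := congrFun hvv (myIdx hT p i)
    rwa [hUapp, hUapp] at this
  · intro v v' hvv
    funext p
    apply hkey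
    have h1 : (fun p => kf (v p)) = (fun p => kf (v' p)) :=
      finFunctionFinEquiv.injective (Fin.ext hvv)
    have := congrFun h1 p
    simpa [hkf, Fin.ext_iff] using this
  · intro v v' hvv
    have hex : ∃ p, key (v p) < key (v' p) := by
      by_contra hc
      push_neg at hc
      have hle : K v' ≤ K v := by
        simp only [hK, finFunctionFinEquiv_apply]
        exact Finset.sum_le_sum (fun p _ =>
          Nat.mul_le_mul_right _ (by simpa [hkf] using hc p))
      omega
    obtain ⟨p, hp⟩ := hex
    obtain ⟨i, hi⟩ := harc _ _ hp
    exact ⟨myIdx hT p i, by rwa [hUapp, hUapp]⟩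

open Filter in
/-- If a digraph `D` attains its Sperner capacity `C_Sp(D)` (the limit of
`ω_tr(D^t)^(1/t)`, bundled as a `Tendsto` hypothesis) in finite length, i.e.
`C_Sp(D) = ω_tr(D^k)^(1/k)` for some positive integer `k`, then
`C_Sp(M(D)) > C_Sp(D)`. -/
theorem spernerCapacity_mycielskian_gt {V : Type*} [Fintype V] (D : V → V → Prop)
    (c cM : ℝ)
    (hc : Tendsto (fun t : ℕ => (transCliqueNum (dORpow D t) : ℝ) ^ ((1 : ℝ) / t))
      atTop (nhds c))
    (hcM : Tendsto
      (fun t : ℕ => (transCliqueNum (dORpow (dMycielskian D) t) : ℝ) ^ ((1 : ℝ) / t))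
      atTop (nhds cM))
    (k : ℕ) (hk : 1 ≤ k)
    (hfin : c = (transCliqueNum (dORpow D k) : ℝ) ^ ((1 : ℝ) / k)) :
    c < cM := by
  classical
  have hk0 : 0 < k := hk
  set n : ℕ := transCliqueNum (dORpow D k) with hn
  -- extract a witness clique of size n in D^k
  have hmem : n ∈ {m | ∃ f : Fin m → (Fin k → V), IsTransClique (dORpow D k) m f} := by
    rw [hn, transCliqueNum]
    exact Nat.sSup_mem ⟨0, Fin.elim0, fun x => x.elim0, fun i => i.elim0⟩
      (bddAbove_cliqueSet _)
  obtain ⟨f, hf⟩ := hmem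
  set m : ℕ := max n 1 with hm
  have hm0 : 0 < m := le_max_right n 1
  have hnm : n ≤ m := le_max_left n 1
  set T : ℕ := m * k with hT
  have hT0 : 0 < T := Nat.mul_pos hm0 hk0
  set N : ℕ := n ^ m + 1 with hN
  -- the main construction and its powers
  obtain ⟨huinj, hkinj, harc⟩ := myMainClique D hk0 hm0 hnm f hf
  have hbound : ∀ a : ℕ, N ^ a ≤ transCliqueNum (dORpow (dMycielskian D) (a * T)) := by
    intro a
    obtain ⟨U, K, hU, hK, hUK⟩ := myPowClique (dMycielskian D) hT0
      (myUO hk0 f) (myKeyO hm0) huinj hkinj harc a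
    have hcard : Fintype.card (Fin a → Option (Fin m → Fin n)) = N ^ a := by
      rw [Fintype.card_fun, Fintype.card_option, Fintype.card_fun,
        Fintype.card_fin, Fintype.card_fin, Fintype.card_fin, hN]
    calc N ^ a = Fintype.card (Fin a → Option (Fin m → Fin n)) := hcard.symm
      _ ≤ transCliqueNum (dORpow (dMycielskian D) (a * T)) :=
          le_transCliqueNum_of_key _ U K hU hK hUK
  -- the value B = N^(1/T)
  set B : ℝ := (N : ℝ) ^ ((1 : ℝ) / T) with hB
  have hcB : c < B := by
    have h1 : c = ((n : ℝ) ^ (m : ℕ)) ^ ((1 : ℝ) / (T : ℕ)) := by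
      rw [hfin]
      rw [← Real.rpow_natCast (n : ℝ) m, ← Real.rpow_mul (by positivity)]
      congr 1
      have hm' : (m : ℝ) ≠ 0 := Nat.cast_ne_zero.2 hm0.ne'
      have hk' : (k : ℝ) ≠ 0 := Nat.cast_ne_zero.2 hk0.ne'
      have hTr : (T : ℝ) = (m : ℝ) * k := by rw [hT]; push_cast; ring
      rw [hTr]
      field_simp
    have h2 : (N : ℝ) = (n : ℝ) ^ (m : ℕ) + 1 := by rw [hN]; push_cast; ring
    rw [h1, hB, h2]
    exact Real.rpow_lt_rpow (by positivity) (lt_add_one _) (by positivity)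
  have hBcM : B ≤ cM := by
    have hsub : Tendsto (fun a : ℕ => a * T) atTop atTop :=
      tendsto_atTop_mono (fun a => Nat.le_mul_of_pos_right a hT0) tendsto_id
    refine ge_of_tendsto (hcM.comp hsub) ?_
    refine eventually_atTop.2 ⟨1, fun a ha => ?_⟩
    show B ≤ (transCliqueNum (dORpow (dMycielskian D) (a * T)) : ℝ) ^ ((1 : ℝ) / (a * T : ℕ))
    have h1 : ((N ^ a : ℕ) : ℝ) ^ ((1 : ℝ) / (a * T : ℕ)) ≤
        (transCliqueNum (dORpow (dMycielskian D) (a * T)) : ℝ) ^ ((1 : ℝ) / (a * T : ℕ)) :=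
      Real.rpow_le_rpow (by positivity) (Nat.cast_le.2 (hbound a)) (by positivity)
    refine le_trans (le_of_eq ?_) h1
    rw [hB]
    have hNa : ((N ^ a : ℕ) : ℝ) = (N : ℝ) ^ (a : ℕ) := by push_cast; ring
    rw [hNa, ← Real.rpow_natCast (N : ℝ) a, ← Real.rpow_mul (by positivity)]
    congr 1
    have ha' : (a : ℝ) ≠ 0 := Nat.cast_ne_zero.2 (by omega)
    have hT' : (T : ℝ) ≠ 0 := Nat.cast_ne_zero.2 hT0.ne'
    have hTa : ((a * T : ℕ) : ℝ) = (a : ℝ) * T := by push_cast; ring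
    rw [hTa]
    field_simp
  exact lt_of_lt_of_le hcB hBcM
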